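/- For fixed s > 0, the function x ↦ log Φ(−s/√(1 + d/(e^x·s²))) (the approximate Gaussian-model error curve on log-log scale in n = e^x) is eventually convex for large x; i.e., in the large-n regime it exhibits power-law-like (non-concave) scaling toward the irreducible error Φ(−s). -/

import Mathlib

/-- The standard normal CDF `Φ`. -/
noncomputable def stdNormalCDF (t : ℝ) : ℝ :=
  ∫ u in Set.Iic t, (1 / Real.sqrt (2 * Real.pi)) * Real.exp (-u ^ 2 / 2)

open MeasureTheory Real Set


noncomputable def phi (u : ℝ) : ℝ := (1 / Real.sqrt (2 * Real.pi)) * Real.exp (-u ^ 2 / 2)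

lemma phi_pos (u : ℝ) : 0 < phi u := by
  have : 0 < Real.sqrt (2 * Real.pi) := Real.sqrt_pos.2 (by positivity)
  exact mul_pos (by positivity) (Real.exp_pos _)

lemma phi_cont : Continuous phi := by
  unfold phi; continuity

lemma phi_integrable : Integrable phi := by
  have h : Integrable (fun u : ℝ => Real.exp (-(1/2) * u ^ 2)) :=
    integrable_exp_neg_mul_sq (by norm_num)
  have := h.const_mul (1 / Real.sqrt (2 * Real.pi))
  convert this using 2 with u
  unfold phi
  ring_nf

lemma phi_hasDerivAt (u : ℝ) : HasDerivAt phi (-u * phi u) u := by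
  have h1 : HasDerivAt (fun u : ℝ => -u ^ 2 / 2) (-u) u := by
    have := ((hasDerivAt_pow 2 u).neg).div_const 2
    refine this.congr_deriv ?_; symm; push_cast; ring
  have := (h1.exp).const_mul (1 / Real.sqrt (2 * Real.pi))
  refine this.congr_deriv ?_; symm <;> unfold phi <;> ring


lemma phi_le (u : ℝ) : phi u ≤ phi 0 := by
  unfold phi
  have h0 : (0:ℝ) < 1 / Real.sqrt (2 * Real.pi) := by positivity
  have : Real.exp (-u ^ 2 / 2) ≤ Real.exp (-0 ^ 2 / 2) :=
    Real.exp_le_exp.2 (by nlinarith [sq_nonneg u])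
  nlinarith [Real.exp_pos (-u^2/2)]


lemma cdf_eq (t : ℝ) : stdNormalCDF t = ∫ u in Set.Iic t, phi u := rfl

lemma cdf_pos (t : ℝ) : 0 < stdNormalCDF t := by
  rw [cdf_eq, setIntegral_pos_iff_support_of_nonneg_ae]
  · have : Function.support phi = Set.univ := by
      ext u; simp [Function.mem_support, (phi_pos u).ne']
    rw [this]
    simp [Real.volume_Iic]
  · exact Filter.Eventually.of_forall fun u => (phi_pos u).le
  · exact phi_integrable.integrableOn

lemma cdf_mono : Monotone stdNormalCDF := by
  intro a b hab
  rw [cdf_eq, cdf_eq]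
  apply setIntegral_mono_set phi_integrable.integrableOn
    (Filter.Eventually.of_forall fun u => (phi_pos u).le)
  exact HasSubset.Subset.eventuallyLE (Iic_subset_Iic.2 hab)

lemma cdf_hasDerivAt (t : ℝ) : HasDerivAt stdNormalCDF (phi t) t := by
  have key : ∀ u : ℝ, stdNormalCDF u = stdNormalCDF 0 + ∫ x in (0:ℝ)..u, phi x := by
    intro u
    rw [cdf_eq, cdf_eq]
    rw [← intervalIntegral.integral_Iic_sub_Iic phi_integrable.integrableOn
      phi_integrable.integrableOn]
    ring
  have hD : HasDerivAt (fun u => stdNormalCDF 0 + ∫ x in (0:ℝ)..u, phi x) (phi t) t := by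
    apply HasDerivAt.const_add
    exact intervalIntegral.integral_hasDerivAt_right
      (phi_integrable.intervalIntegrable)
      (phi_cont.stronglyMeasurableAtFilter _ _)
      phi_cont.continuousAt
  have : stdNormalCDF = fun u => stdNormalCDF 0 + ∫ x in (0:ℝ)..u, phi x := funext key
  rw [this]
  exact hD

noncomputable def yy (A x : ℝ) : ℝ := A * Real.exp (-x)
noncomputable def rr (A x : ℝ) : ℝ := Real.sqrt (1 + yy A x)
noncomputable def vv (s A x : ℝ) : ℝ := -s / rr A x
noncomputable def vd1 (s A x : ℝ) : ℝ := -(s * yy A x) / (2 * (rr A x) ^ 3)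
noncomputable def vd2 (s A x : ℝ) : ℝ :=
  s * yy A x / (2 * (rr A x) ^ 3) - 3 * s * (yy A x) ^ 2 / (4 * (rr A x) ^ 5)

variable {s A x : ℝ}

lemma yy_pos (hA : 0 < A) : 0 < yy A x := mul_pos hA (Real.exp_pos _)

lemma rr_sq (hA : 0 < A) : (rr A x) ^ 2 = 1 + yy A x :=
  Real.sq_sqrt (by nlinarith [yy_pos (x := x) hA])

lemma one_le_rr (hA : 0 < A) : 1 ≤ rr A x := by
  rw [show (1:ℝ) = Real.sqrt 1 by simp]
  exact Real.sqrt_le_sqrt (by nlinarith [yy_pos (x := x) hA])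

lemma rr_pos (hA : 0 < A) : 0 < rr A x := lt_of_lt_of_le one_pos (one_le_rr hA)

lemma hasDerivAt_yy : HasDerivAt (yy A) (-(yy A x)) x := by
  have := ((hasDerivAt_id x).neg.exp).const_mul A
  refine this.congr_deriv ?_; symm <;> simp [yy] <;> ring

lemma hasDerivAt_rr (hA : 0 < A) : HasDerivAt (rr A) (-(yy A x) / (2 * rr A x)) x := by
  have h1 : HasDerivAt (fun x => 1 + yy A x) (-(yy A x)) x :=
    (hasDerivAt_yy).const_add 1
  have h2 : (1 + yy A x) ≠ 0 := by nlinarith [yy_pos (x := x) hA]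
  have := (Real.hasDerivAt_sqrt h2).comp x h1
  refine this.congr_deriv ?_; symm
  rw [show Real.sqrt (1 + yy A x) = rr A x from rfl]
  ring

lemma hasDerivAt_vv (hs : 0 < s) (hA : 0 < A) : HasDerivAt (vv s A) (vd1 s A x) x := by
  have hr := rr_pos (x := x) hA
  have := ((hasDerivAt_rr (x := x) hA).inv hr.ne').const_mul (-s)
  refine this.congr_deriv ?_; symm
  unfold vd1
  field_simp

lemma hasDerivAt_vd1 (hs : 0 < s) (hA : 0 < A) : HasDerivAt (vd1 s A) (vd2 s A x) x := by
  have hr := rr_pos (x := x) hA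
  have hnum : HasDerivAt (fun x => -(s * yy A x)) (s * yy A x) x := by
    have := ((hasDerivAt_yy (A := A) (x := x)).const_mul s).neg
    refine this.congr_deriv ?_; symm; ring
  have hr3 : HasDerivAt (fun x => 2 * (rr A x) ^ 3)
      (2 * (3 * (rr A x) ^ 2 * (-(yy A x) / (2 * rr A x)))) x := by
    exact ((hasDerivAt_rr (x := x) hA).pow 3).const_mul 2
  have hden_ne : 2 * (rr A x) ^ 3 ≠ 0 := by positivity
  have := hnum.div hr3 hden_ne
  refine this.congr_deriv ?_; symm
  unfold vd2
  rw [div_sub_div _ _ (by positivity : (2:ℝ) * (rr A x)^3 ≠ 0) (by positivity : (4:ℝ) * (rr A x)^5 ≠ 0)]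
  field_simp
  ring

noncomputable def fd1 (s A x : ℝ) : ℝ :=
  phi (vv s A x) * vd1 s A x / stdNormalCDF (vv s A x)
noncomputable def fd2 (s A x : ℝ) : ℝ :=
  phi (vv s A x) / stdNormalCDF (vv s A x) *
    (vd2 s A x - vv s A x * vd1 s A x ^ 2
      - phi (vv s A x) / stdNormalCDF (vv s A x) * vd1 s A x ^ 2)


variable {s A x : ℝ}

lemma hasDerivAt_ff (hs : 0 < s) (hA : 0 < A) :
    HasDerivAt (fun x => Real.log (stdNormalCDF (vv s A x))) (fd1 s A x) x := by
  have h1 : HasDerivAt (fun x => stdNormalCDF (vv s A x)) (phi (vv s A x) * vd1 s A x) x :=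
    (cdf_hasDerivAt _).comp x (hasDerivAt_vv hs hA)
  have := (Real.hasDerivAt_log (cdf_pos (vv s A x)).ne').comp x h1
  refine this.congr_deriv ?_; symm
  unfold fd1
  field_simp

lemma hasDerivAt_fd1 (hs : 0 < s) (hA : 0 < A) :
    HasDerivAt (fd1 s A) (fd2 s A x) x := by
  have hv := hasDerivAt_vv (x := x) hs hA
  have hD : HasDerivAt (fun x => stdNormalCDF (vv s A x)) (phi (vv s A x) * vd1 s A x) x :=
    (cdf_hasDerivAt _).comp x hv
  have hphiv : HasDerivAt (fun x => phi (vv s A x))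
      (-(vv s A x) * phi (vv s A x) * vd1 s A x) x :=
    (phi_hasDerivAt _).comp x hv
  have hN : HasDerivAt (fun x => phi (vv s A x) * vd1 s A x)
      (-(vv s A x) * phi (vv s A x) * vd1 s A x * vd1 s A x
        + phi (vv s A x) * vd2 s A x) x :=
    hphiv.mul (hasDerivAt_vd1 hs hA)
  have := hN.div hD (cdf_pos (vv s A x)).ne'
  refine this.congr_deriv ?_; symm
  unfold fd2
  have hΦ := (cdf_pos (vv s A x)).ne'
  field_simp
  ring

/-- positivity of the second derivative in the far regime -/
lemma fd2_nonneg (hs : 0 < s) (hA : 0 < A)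
    (h1 : yy A x ≤ 1)
    (h2 : yy A x * (6 + (phi 0 / stdNormalCDF (-s)) * s) ≤ 2) :
    0 ≤ fd2 s A x := by
  set C := phi 0 / stdNormalCDF (-s) with hC
  have hy := yy_pos (x := x) hA
  have hr1 := one_le_rr (x := x) hA
  have hrp := rr_pos (x := x) hA
  have hrsq := rr_sq (x := x) hA
  have hr2 : rr A x ≤ 2 := by nlinarith
  have hC0 : 0 < C := div_pos (phi_pos 0) (cdf_pos _)
  -- V bounds
  have hVneg : vv s A x < 0 := div_neg_of_neg_of_pos (by linarith) hrp
  have hVge : -s ≤ vv s A x := by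
    rw [vv, neg_div, neg_le_neg_iff]
    calc s / rr A x ≤ s / 1 := by
          apply div_le_div_of_nonneg_left hs.le one_pos hr1
        _ = s := div_one s
  -- Lp bounds
  have hLp_pos : 0 < phi (vv s A x) / stdNormalCDF (vv s A x) :=
    div_pos (phi_pos _) (cdf_pos _)
  have hLp_le : phi (vv s A x) / stdNormalCDF (vv s A x) ≤ C := by
    rw [hC]
    apply div_le_div₀ (phi_pos 0).le (phi_le _) (cdf_pos _)
    exact cdf_mono hVge
  -- main polynomial inequality
  have hkey : 0 ≤ 2 * (rr A x) ^ 3 - 3 * yy A x * rr A x - C * s * yy A x := by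
    nlinarith [mul_le_mul_of_nonneg_left hr2 (by positivity : (0:ℝ) ≤ 3 * yy A x)]
  have hfact : vd2 s A x - C * (vd1 s A x) ^ 2
      = (s * yy A x / (4 * (rr A x) ^ 6)) *
        (2 * (rr A x) ^ 3 - 3 * yy A x * rr A x - C * s * yy A x) := by
    unfold vd2 vd1
    field_simp
    ring
  have hmain : C * (vd1 s A x) ^ 2 ≤ vd2 s A x := by
    nlinarith [mul_nonneg (by positivity : (0:ℝ) ≤ s * yy A x / (4 * (rr A x)^6)) hkey]
  unfold fd2
  have hsq : 0 ≤ (vd1 s A x) ^ 2 := sq_nonneg _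
  apply mul_nonneg hLp_pos.le
  nlinarith [mul_nonneg (neg_nonneg.2 hVneg.le) hsq,
    mul_le_mul_of_nonneg_right hLp_le hsq]

theorem gaussModel_loglog_eventually_convex (s d : ℝ) (hs : 0 < s) (hd : 0 < d) :
    ∃ x₀ : ℝ, ConvexOn ℝ (Set.Ici x₀)
      (fun x : ℝ =>
        Real.log (stdNormalCDF (-s / Real.sqrt (1 + d / (Real.exp x * s ^ 2))))) := by
  set A := d / s ^ 2 with hA
  have hA0 : 0 < A := div_pos hd (by positivity)
  set C := phi 0 / stdNormalCDF (-s) with hC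
  have hC0 : 0 < C := div_pos (phi_pos 0) (cdf_pos _)
  have hden : (0:ℝ) < 6 + C * s := by positivity
  set ε := min 1 (2 / (6 + C * s)) with hε
  have hε0 : 0 < ε := lt_min one_pos (by positivity)
  refine ⟨Real.log (A / ε), ?_⟩
  have hfun : (fun x : ℝ =>
        Real.log (stdNormalCDF (-s / Real.sqrt (1 + d / (Real.exp x * s ^ 2)))))
      = fun x => Real.log (stdNormalCDF (vv s A x)) := by
    funext x
    unfold vv rr
    rw [show 1 + d / (Real.exp x * s ^ 2) = 1 + yy A x from by
      unfold yy; rw [Real.exp_neg, hA]; field_simp]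
  rw [hfun]
  have hyle : ∀ x : ℝ, Real.log (A / ε) ≤ x → yy A x ≤ ε := by
    intro x hx
    have h1 : A / ε ≤ Real.exp x := by
      calc A / ε = Real.exp (Real.log (A / ε)) := (Real.exp_log (by positivity)).symm
        _ ≤ Real.exp x := Real.exp_le_exp.2 hx
    have h2 : A ≤ Real.exp x * ε := (div_le_iff₀ hε0).1 h1
    unfold yy
    rw [Real.exp_neg, ← div_eq_mul_inv, div_le_iff₀ (Real.exp_pos x)]
    linarith [mul_comm (Real.exp x) ε ▸ h2]
  have hderiv1 : deriv (fun x => Real.log (stdNormalCDF (vv s A x))) = fd1 s A :=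
    funext fun x => (hasDerivAt_ff hs hA0).deriv
  apply convexOn_of_deriv2_nonneg (convex_Ici _)
  · have : Continuous (fun x => Real.log (stdNormalCDF (vv s A x))) := by
      rw [continuous_iff_continuousAt]
      exact fun x => (hasDerivAt_ff hs hA0).differentiableAt.continuousAt
    exact this.continuousOn
  · exact fun x _ => (hasDerivAt_ff hs hA0).differentiableAt.differentiableWithinAt
  · rw [hderiv1]
    exact fun x _ => (hasDerivAt_fd1 hs hA0).differentiableAt.differentiableWithinAt
  · intro x hx
    rw [interior_Ici] at hx
    have hy : yy A x ≤ ε := hyle x (le_of_lt hx)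
    have h2nd : deriv^[2] (fun x => Real.log (stdNormalCDF (vv s A x))) x = fd2 s A x := by
      rw [show deriv^[2] (fun x => Real.log (stdNormalCDF (vv s A x)))
          = deriv (deriv (fun x => Real.log (stdNormalCDF (vv s A x)))) from rfl, hderiv1]
      exact (hasDerivAt_fd1 hs hA0).deriv
    rw [h2nd]
    apply fd2_nonneg hs hA0 (le_trans hy (min_le_left _ _))
    have h3 : yy A x ≤ 2 / (6 + C * s) := le_trans hy (min_le_right _ _)
    rw [← hC]
    rw [le_div_iff₀ hden] at h3
    exact h3
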